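/- Weak simulation lemma: for every bounded measurable f : S×A → ℝ, the prediction error satisfies |E(f)| = |(f* − f)(s₀,π)| ≤ (1/(1−γ)) · ‖f − Tf‖_π. -/

import Mathlib

open MeasureTheory ProbabilityTheory
open scoped ENNReal NNReal

noncomputable section

/-- Expected value of `f (s, ·)` under the policy kernel at state `s`: `f(s,π)`. -/
def polExp {S A : Type*} [MeasurableSpace S] [MeasurableSpace A]
    (pol : Kernel S A) (f : S × A → ℝ) (s : S) : ℝ :=
  ∫ a, f (s, a) ∂(pol s)

/-- The Bellman evaluation operator `(Tf)(s,a) = r(s,a) + γ E_{s' ∼ P(·|s,a)} f(s',π)`. -/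
def bellmanOp {S A : Type*} [MeasurableSpace S] [MeasurableSpace A]
    (γ : ℝ) (rew : S × A → ℝ) (P : Kernel (S × A) S) (pol : Kernel S A)
    (f : S × A → ℝ) : S × A → ℝ :=
  fun sa => rew sa + γ * ∫ s', polExp pol f s' ∂(P sa)

/-- Squared `L²(μ)` norm: `‖h‖_μ² = E_μ h²`. -/
def l2sq {X : Type*} [MeasurableSpace X] (μ : Measure X) (h : X → ℝ) : ℝ :=
  ∫ x, (h x) ^ 2 ∂μ

/-- `L²(μ)` norm `‖h‖_μ`. -/
def l2 {X : Type*} [MeasurableSpace X] (μ : Measure X) (h : X → ℝ) : ℝ :=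
  Real.sqrt (l2sq μ h)

/-- Distance in `L²(μ)` from `h` to the class `F`: `inf_{g ∈ F} ‖g − h‖_μ`. -/
def projDist {S A : Type*} [MeasurableSpace S] [MeasurableSpace A]
    (μ : Measure (S × A)) (F : Set ((S × A) → ℝ)) (h : (S × A) → ℝ) : ℝ :=
  sInf ((fun g => l2 μ (fun x => g x - h x)) '' F)

/-- Bellman error `‖f − Tf‖_μ`. -/
def bellErr {S A : Type*} [MeasurableSpace S] [MeasurableSpace A]
    (γ : ℝ) (rew : S × A → ℝ) (P : Kernel (S × A) S) (pol : Kernel S A)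
    (μ : Measure (S × A)) (f : (S × A) → ℝ) : ℝ :=
  l2 μ (fun x => f x - bellmanOp γ rew P pol f x)

/-- The localized class `F(r) = {f ∈ F : ‖f − Tf‖_μ ≤ r}`. -/
def Floc {S A : Type*} [MeasurableSpace S] [MeasurableSpace A]
    (γ : ℝ) (rew : S × A → ℝ) (P : Kernel (S × A) S) (pol : Kernel S A)
    (μ : Measure (S × A)) (F : Set ((S × A) → ℝ)) (r : ℝ) : Set ((S × A) → ℝ) :=
  {f ∈ F | bellErr γ rew P pol μ f ≤ r}

/-- The incompleteness function `I(r) = sup_{f ∈ F(r)} inf_{g ∈ F} ‖g − Tf‖_μ`. -/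
def Iloc {S A : Type*} [MeasurableSpace S] [MeasurableSpace A]
    (γ : ℝ) (rew : S × A → ℝ) (P : Kernel (S × A) S) (pol : Kernel S A)
    (μ : Measure (S × A)) (F : Set ((S × A) → ℝ)) (r : ℝ) : ℝ :=
  sSup ((fun f => projDist μ F (bellmanOp γ rew P pol f)) '' Floc γ rew P pol μ F r)

/-- The incompleteness factor
`β = sup_{f ∈ F, ‖f−Tf‖_μ > 0} inf_{g ∈ F} ‖g − Tf‖_μ / ‖f − Tf‖_μ`. -/
def betaFac {S A : Type*} [MeasurableSpace S] [MeasurableSpace A]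
    (γ : ℝ) (rew : S × A → ℝ) (P : Kernel (S × A) S) (pol : Kernel S A)
    (μ : Measure (S × A)) (F : Set ((S × A) → ℝ)) : ℝ :=
  sSup ((fun f => projDist μ F (bellmanOp γ rew P pol f) / bellErr γ rew P pol μ f) ''
    {f ∈ F | 0 < bellErr γ rew P pol μ f})

/-- The population minimax loss `M(f) = ‖f − Tf‖_μ² − inf_{g ∈ F} ‖g − Tf‖_μ²`. -/
def minimaxLoss {S A : Type*} [MeasurableSpace S] [MeasurableSpace A]
    (γ : ℝ) (rew : S × A → ℝ) (P : Kernel (S × A) S) (pol : Kernel S A)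
    (μ : Measure (S × A)) (F : Set ((S × A) → ℝ)) (f : (S × A) → ℝ) : ℝ :=
  l2sq μ (fun x => f x - bellmanOp γ rew P pol f x) -
    sInf ((fun g => l2sq μ (fun x => g x - bellmanOp γ rew P pol f x)) '' F)

/-- One step of the state-action chain: transition by `P` then act by `pol`. -/
def stepMeas {S A : Type*} [MeasurableSpace S] [MeasurableSpace A]
    (P : Kernel (S × A) S) (pol : Kernel S A) (sa : S × A) : Measure (S × A) :=
  (P sa).bind (fun s' => (pol s').map (fun a' => (s', a')))

/-- The law `P_h` of `(S_h, A_h)` when following `pol` from the state `s0`. -/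
def stepLaw {S A : Type*} [MeasurableSpace S] [MeasurableSpace A]
    (P : Kernel (S × A) S) (pol : Kernel S A) (s0 : S) : ℕ → Measure (S × A)
  | 0 => (pol s0).map (fun a => (s0, a))
  | (h + 1) => (stepLaw P pol s0 h).bind (stepMeas P pol)

/-- The discounted occupancy measure `d^π = (1−γ) Σ_{h≥0} γ^h P_h`. -/
def occMeas {S A : Type*} [MeasurableSpace S] [MeasurableSpace A]
    (γ : ℝ) (P : Kernel (S × A) S) (pol : Kernel S A) (s0 : S) : Measure (S × A) :=
  ENNReal.ofReal (1 - γ) •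
    Measure.sum (fun h : ℕ => ENNReal.ofReal γ ^ h • stepLaw P pol s0 h)

/-- The prediction error `E(f) = (f* − f)(s₀, π)`. -/
def predErr {S A : Type*} [MeasurableSpace S] [MeasurableSpace A]
    (pol : Kernel S A) (fstar f : S × A → ℝ) (s0 : S) : ℝ :=
  polExp pol (fun x => fstar x - f x) s0

/-- The concentrability coefficient `C = sup_{f ∈ F} ‖f − Tf‖_π² / ‖f − Tf‖_μ²`. -/
def concCoef {S A : Type*} [MeasurableSpace S] [MeasurableSpace A]
    (γ : ℝ) (rew : S × A → ℝ) (P : Kernel (S × A) S) (pol : Kernel S A)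
    (μ dpi : Measure (S × A)) (F : Set ((S × A) → ℝ)) : ℝ :=
  sSup ((fun f => l2sq dpi (fun x => f x - bellmanOp γ rew P pol f x) /
      l2sq μ (fun x => f x - bellmanOp γ rew P pol f x)) '' F)

/-- The law of a data tuple `(s, a, R, s')` with `(s,a) ∼ μ`, `R ∼ RL(s,a)`,
`s' ∼ P(·|s,a)`. -/
def tupleLaw {S A : Type*} [MeasurableSpace S] [MeasurableSpace A]
    (μ : Measure (S × A)) (RL : Kernel (S × A) ℝ) (P : Kernel (S × A) S) :
    Measure ((S × A) × ℝ × S) :=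
  μ.bind (fun sa => ((RL sa).prod (P sa)).map (fun rs => (sa, rs)))

/-- The squared TD cost `C(g,f) = (g(s,a) − R − γ f(s',π))²` of a tuple. -/
def tdCost {S A : Type*} [MeasurableSpace S] [MeasurableSpace A]
    (γ : ℝ) (pol : Kernel S A) (g f : S × A → ℝ) (t : (S × A) × ℝ × S) : ℝ :=
  (g t.1 - t.2.1 - γ * polExp pol f t.2.2) ^ 2

/-- The empirical loss `L̂(g,f)`: the average of the squared TD cost over the dataset. -/
def empLoss {S A : Type*} [MeasurableSpace S] [MeasurableSpace A]
    (γ : ℝ) (pol : Kernel S A) {n : ℕ} (D : Fin n → (S × A) × ℝ × S)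
    (g f : S × A → ℝ) : ℝ :=
  (∑ i, tdCost γ pol g f (D i)) / n

/-- The empirical minimax objective `M̂(f) = L̂(f,f) − inf_{g ∈ F} L̂(g,f)`. -/
def empMinimax {S A : Type*} [MeasurableSpace S] [MeasurableSpace A]
    (γ : ℝ) (pol : Kernel S A) (F : Set ((S × A) → ℝ)) {n : ℕ}
    (D : Fin n → (S × A) × ℝ × S) (f : S × A → ℝ) : ℝ :=
  empLoss γ pol D f f - sInf ((fun g => empLoss γ pol D g f) '' F)

/-- `f̂` is an empirical minimizer of `M̂` over `F`. -/
def IsEmpMinimizer {S A : Type*} [MeasurableSpace S] [MeasurableSpace A]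
    (γ : ℝ) (pol : Kernel S A) (F : Set ((S × A) → ℝ)) {n : ℕ}
    (D : Fin n → (S × A) × ℝ × S) (fhat : S × A → ℝ) : Prop :=
  fhat ∈ F ∧ ∀ f ∈ F, empMinimax γ pol F D fhat ≤ empMinimax γ pol F D f

/-- The law of a single Rademacher sign: `±1` with probability `1/2` each. -/
def signMeas : Measure ℝ :=
  (2⁻¹ : ℝ≥0∞) • Measure.dirac (1 : ℝ) + (2⁻¹ : ℝ≥0∞) • Measure.dirac (-1 : ℝ)

/-- Rademacher complexity of a class `H` with `n` covariates drawn i.i.d. from `ξ`: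
`R_n[H] = E sup_{h ∈ H} |(1/n) Σ_i ε_i h(x_i)|`. -/
def radComp {X : Type*} [MeasurableSpace X] (ξ : Measure X) (n : ℕ)
    (H : Set (X → ℝ)) : ℝ :=
  ∫ p, sSup ((fun h => |(∑ i, p.2 i * h (p.1 i)) / n|) '' H)
    ∂((Measure.pi (fun _ : Fin n => ξ)).prod (Measure.pi (fun _ : Fin n => signMeas)))

/-- The `X`-process `X(f) = C(f,f) − C(g_f, f)` as a function of the data tuple. -/
def Xproc {S A : Type*} [MeasurableSpace S] [MeasurableSpace A]
    (γ : ℝ) (pol : Kernel S A) (gf : ((S × A) → ℝ) → (S × A) → ℝ)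
    (f : S × A → ℝ) : (S × A) × ℝ × S → ℝ :=
  fun t => tdCost γ pol f f t - tdCost γ pol (gf f) f t

/-- The `Y`-process `Y(g) = C(f*,f*) − C(g, f*)` as a function of the data tuple. -/
def Yproc {S A : Type*} [MeasurableSpace S] [MeasurableSpace A]
    (γ : ℝ) (pol : Kernel S A) (fstar g : S × A → ℝ) : (S × A) × ℝ × S → ℝ :=
  fun t => tdCost γ pol fstar fstar t - tdCost γ pol g fstar t

end

noncomputable section WSLAux
namespace WSLAux
open MeasureTheory ProbabilityTheory
open scoped ENNReal NNReal

lemma integrable_of_bdd {X : Type*} [MeasurableSpace X] {ν : Measure X} [IsFiniteMeasure ν]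
    {φ : X → ℝ} (hm : Measurable φ) {C : ℝ} (hb : ∀ z, |φ z| ≤ C) : Integrable φ ν :=
  (integrable_const C).mono' hm.aestronglyMeasurable
    (Filter.Eventually.of_forall fun z => by simpa [Real.norm_eq_abs] using hb z)

lemma bind_kernel_eq_map_snd {X Y : Type*} [MeasurableSpace X] [MeasurableSpace Y]
    (μ : Measure X) [SFinite μ] (K : Kernel X Y) [IsSFiniteKernel K] :
    μ.bind ⇑K = (μ.compProd K).map Prod.snd := by
  ext s hs
  rw [Measure.map_apply measurable_snd hs,
    Measure.compProd_apply (measurable_snd hs), Measure.bind_apply hs K.measurable.aemeasurable]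
  rfl

lemma integral_bind_kernel {X Y : Type*} [MeasurableSpace X] [MeasurableSpace Y]
    (μ : Measure X) [IsProbabilityMeasure μ] (K : Kernel X Y) [IsMarkovKernel K]
    {φ : Y → ℝ} (hm : Measurable φ) {C : ℝ} (hb : ∀ z, |φ z| ≤ C) :
    ∫ y, φ y ∂(μ.bind ⇑K) = ∫ x, ∫ y, φ y ∂(K x) ∂μ := by
  rw [bind_kernel_eq_map_snd,
    integral_map measurable_snd.aemeasurable hm.aestronglyMeasurable,
    Measure.integral_compProd
      (integrable_of_bdd (hm.comp measurable_snd) (fun z => hb z.2)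
        : Integrable (fun p : X × Y => φ p.2) _)]

variable {S A : Type*} [MeasurableSpace S] [MeasurableSpace A]
  (P : Kernel (S × A) S) [IsMarkovKernel P] (pol : Kernel S A) [IsMarkovKernel pol]

lemma stepMeas_eq_apply (sa : S × A) :
    stepMeas P pol sa = ((Kernel.id ×ₖ pol) ∘ₖ P) sa := by
  rw [Kernel.comp_apply]
  unfold stepMeas
  congr 1
  funext s'
  rw [Kernel.prod_apply, Kernel.id_apply, Measure.dirac_prod]

lemma stepMeas_eq : stepMeas P pol = ⇑((Kernel.id ×ₖ pol) ∘ₖ P) :=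
  funext (stepMeas_eq_apply P pol)

lemma stepLaw_prob (s0 : S) (h : ℕ) : IsProbabilityMeasure (stepLaw P pol s0 h) := by
  induction h with
  | zero =>
    exact Measure.isProbabilityMeasure_map (measurable_const.prodMk measurable_id).aemeasurable
  | succ h ih =>
    haveI := ih
    rw [show stepLaw P pol s0 (h + 1) = (stepLaw P pol s0 h).bind (stepMeas P pol) from rfl,
      stepMeas_eq, bind_kernel_eq_map_snd]
    exact Measure.isProbabilityMeasure_map measurable_snd.aemeasurable

lemma measurable_polExp {φ : S × A → ℝ} (hm : Measurable φ) :
    Measurable (polExp pol φ) :=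
  (StronglyMeasurable.integral_kernel_prod_right' (κ := pol) hm.stronglyMeasurable).measurable

lemma abs_polExp_le {φ : S × A → ℝ} {C : ℝ} (hb : ∀ z, |φ z| ≤ C) (s : S) :
    |polExp pol φ s| ≤ C := by
  have h := norm_integral_le_of_norm_le_const (μ := pol s) (C := C)
    (f := fun a => φ (s, a)) (Filter.Eventually.of_forall fun a => by simpa using hb (s, a))
  simpa [polExp] using h

lemma measurable_pexp {φ : S × A → ℝ} (hm : Measurable φ) :
    Measurable (fun sa => ∫ s', polExp pol φ s' ∂(P sa)) :=
  (StronglyMeasurable.integral_kernel_prod_right' (κ := P)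
    (((measurable_polExp pol hm).comp measurable_snd).stronglyMeasurable)).measurable

lemma abs_pexp_le {φ : S × A → ℝ} {C : ℝ} (hb : ∀ z, |φ z| ≤ C) (sa : S × A) :
    |(∫ s', polExp pol φ s' ∂(P sa))| ≤ C := by
  have h := norm_integral_le_of_norm_le_const (μ := P sa) (C := C)
    (f := fun s' => polExp pol φ s')
    (Filter.Eventually.of_forall fun s' => by simpa using abs_polExp_le pol hb s')
  simpa using h

lemma integral_stepMeas {φ : S × A → ℝ} (hm : Measurable φ) {C : ℝ}
    (hb : ∀ z, |φ z| ≤ C) (sa : S × A) :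
    ∫ y, φ y ∂(stepMeas P pol sa) = ∫ s', polExp pol φ s' ∂(P sa) := by
  rw [stepMeas_eq_apply, Kernel.comp_apply, integral_bind_kernel (P sa) _ hm hb]
  refine integral_congr_ae (Filter.Eventually.of_forall fun s' => ?_)
  show ∫ y, φ y ∂((Kernel.id ×ₖ pol) s') = polExp pol φ s'
  rw [Kernel.prod_apply, Kernel.id_apply, Measure.dirac_prod,
    integral_map measurable_prodMk_left.aemeasurable hm.aestronglyMeasurable]
  rfl

lemma integral_stepLaw_succ (s0 : S) (h : ℕ) {φ : S × A → ℝ} (hm : Measurable φ) {C : ℝ}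
    (hb : ∀ z, |φ z| ≤ C) :
    ∫ y, φ y ∂(stepLaw P pol s0 (h + 1)) =
      ∫ sa, (∫ s', polExp pol φ s' ∂(P sa)) ∂(stepLaw P pol s0 h) := by
  haveI := stepLaw_prob P pol s0 h
  rw [show stepLaw P pol s0 (h + 1) = (stepLaw P pol s0 h).bind (stepMeas P pol) from rfl,
    stepMeas_eq, integral_bind_kernel _ _ hm hb]
  exact integral_congr_ae (Filter.Eventually.of_forall fun sa => by
    show ∫ y, φ y ∂(((Kernel.id ×ₖ pol) ∘ₖ P) sa) = _
    rw [← stepMeas_eq_apply, integral_stepMeas P pol hm hb])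

end WSLAux
end WSLAux

noncomputable section WSLOcc
namespace WSLAux
open MeasureTheory ProbabilityTheory Filter
open scoped ENNReal NNReal

variable {S A : Type*} [MeasurableSpace S] [MeasurableSpace A]
  (P : Kernel (S × A) S) [IsMarkovKernel P] (pol : Kernel S A) [IsMarkovKernel pol]

lemma sumLaw_univ (γ : ℝ) (s0 : S) :
    (Measure.sum fun h : ℕ => ENNReal.ofReal γ ^ h • stepLaw P pol s0 h) Set.univ
      = (1 - ENNReal.ofReal γ)⁻¹ := by
  rw [Measure.sum_apply _ MeasurableSet.univ]
  have h1 : ∀ h : ℕ, (ENNReal.ofReal γ ^ h • stepLaw P pol s0 h) Set.univ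
      = ENNReal.ofReal γ ^ h := by
    intro h
    haveI := stepLaw_prob P pol s0 h
    simp [Measure.smul_apply]
  simp_rw [h1]
  exact ENNReal.tsum_geometric _

lemma one_sub_ofReal {γ : ℝ} (hγ0 : 0 ≤ γ) :
    (1 : ℝ≥0∞) - ENNReal.ofReal γ = ENNReal.ofReal (1 - γ) := by
  rw [ENNReal.ofReal_sub _ hγ0, ENNReal.ofReal_one]

lemma isFiniteMeasure_sumLaw {γ : ℝ} (hγ0 : 0 ≤ γ) (hγ1 : γ < 1) (s0 : S) :
    IsFiniteMeasure (Measure.sum fun h : ℕ => ENNReal.ofReal γ ^ h • stepLaw P pol s0 h) := by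
  constructor
  rw [sumLaw_univ]
  refine ENNReal.inv_lt_top.2 ?_
  rw [one_sub_ofReal hγ0]
  exact ENNReal.ofReal_pos.2 (by linarith)

lemma occ_prob {γ : ℝ} (hγ0 : 0 ≤ γ) (hγ1 : γ < 1) (s0 : S) :
    IsProbabilityMeasure (occMeas γ P pol s0) := by
  constructor
  rw [occMeas, Measure.smul_apply, sumLaw_univ, smul_eq_mul, one_sub_ofReal hγ0,
    ENNReal.mul_inv_cancel (by simp [ENNReal.ofReal_pos]; linarith) ENNReal.ofReal_ne_top]

lemma integral_occ {γ : ℝ} (hγ0 : 0 ≤ γ) (hγ1 : γ < 1) (s0 : S)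
    {φ : S × A → ℝ} (hm : Measurable φ) {C : ℝ} (hb : ∀ z, |φ z| ≤ C) :
    ∫ x, φ x ∂(occMeas γ P pol s0)
      = (1 - γ) * ∑' h : ℕ, γ ^ h * ∫ x, φ x ∂(stepLaw P pol s0 h) := by
  haveI := isFiniteMeasure_sumLaw P pol hγ0 hγ1 s0
  rw [occMeas, integral_smul_measure, integral_sum_measure (integrable_of_bdd hm hb),
    ENNReal.toReal_ofReal (by linarith), smul_eq_mul]
  congr 1
  refine tsum_congr fun h => ?_
  rw [integral_smul_measure, ENNReal.toReal_pow, ENNReal.toReal_ofReal hγ0, smul_eq_mul]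

end WSLAux
end WSLOcc

noncomputable section

/-- Weak simulation lemma: for every bounded measurable `f`, the
prediction error satisfies `|E(f)| = |(f* − f)(s₀,π)| ≤ (1/(1−γ)) ‖f − Tf‖_π`. -/
theorem weak_simulation_lemma
    {S A : Type*} [MeasurableSpace S] [MeasurableSpace A]
    (γ : ℝ) (hγ0 : 0 ≤ γ) (hγ1 : γ < 1)
    (rew : S × A → ℝ) (hrew_meas : Measurable rew)
    (hrew_bdd : ∀ x, rew x ∈ Set.Icc (0 : ℝ) 1)
    (P : Kernel (S × A) S) [IsMarkovKernel P]
    (pol : Kernel S A) [IsMarkovKernel pol]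
    -- `f*` is the action-value function of the policy: a bounded measurable fixed
    -- point of the Bellman evaluation operator
    (fstar : (S × A) → ℝ) (hfstar_meas : Measurable fstar)
    (hfstar_bdd : ∃ B : ℝ, ∀ x, |fstar x| ≤ B)
    (hfix : bellmanOp γ rew P pol fstar = fstar)
    -- the initial state
    (s0 : S)
    -- an arbitrary bounded measurable function
    (f : (S × A) → ℝ) (hf_meas : Measurable f) (hf_bdd : ∃ B : ℝ, ∀ x, |f x| ≤ B) :
    |predErr pol fstar f s0| ≤
      (1 / (1 - γ)) *
        l2 (occMeas γ P pol s0) (fun x => f x - bellmanOp γ rew P pol f x) := by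
  classical
  obtain ⟨Bf, hBf⟩ := hf_bdd
  obtain ⟨Bs, hBs⟩ := hfstar_bdd
  have h1γ : (0 : ℝ) < 1 - γ := by linarith
  set T : (S × A) → ℝ := bellmanOp γ rew P pol f with hTdef
  set e : (S × A) → ℝ := fun x => f x - T x with hedef
  set g : (S × A) → ℝ := fun x => fstar x - f x with hgdef
  -- measurability and bounds
  have hPf_meas := WSLAux.measurable_pexp P pol hf_meas
  have hT_meas : Measurable T := hrew_meas.add (measurable_const.mul hPf_meas)
  have hT_bdd : ∀ x, |T x| ≤ 1 + γ * Bf := by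
    intro x
    have h3 := WSLAux.abs_pexp_le P pol hBf x
    have h4 : |rew x| ≤ 1 := abs_le.2 ⟨by linarith [(hrew_bdd x).1], (hrew_bdd x).2⟩
    have h5 : |T x| ≤ |rew x| + |γ * ∫ s', polExp pol f s' ∂(P x)| := abs_add_le _ _
    have h6 : |γ * ∫ s', polExp pol f s' ∂(P x)| = γ * |∫ s', polExp pol f s' ∂(P x)| := by
      rw [abs_mul, abs_of_nonneg hγ0]
    nlinarith [abs_nonneg (∫ s', polExp pol f s' ∂(P x))]
  have he_meas : Measurable e := hf_meas.sub hT_meas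
  have he_bdd : ∀ x, |e x| ≤ Bf + (1 + γ * Bf) := fun x =>
    (abs_sub (f x) (T x)).trans (add_le_add (hBf x) (hT_bdd x))
  have hg_meas : Measurable g := hfstar_meas.sub hf_meas
  have hg_bdd : ∀ x, |g x| ≤ Bs + Bf := fun x =>
    (abs_sub (fstar x) (f x)).trans (add_le_add (hBs x) (hBf x))
  have hPg_meas := WSLAux.measurable_pexp P pol hg_meas
  have hPg_bdd := WSLAux.abs_pexp_le P pol hg_bdd
  -- the key pointwise identity
  have key : ∀ x, g x - γ * (∫ s', polExp pol g s' ∂(P x)) = - e x := by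
    intro x
    have hpolg : ∀ s, polExp pol g s = polExp pol fstar s - polExp pol f s := by
      intro s
      exact integral_sub
        (WSLAux.integrable_of_bdd (hfstar_meas.comp measurable_prodMk_left)
          (fun a => hBs (s, a)))
        (WSLAux.integrable_of_bdd (hf_meas.comp measurable_prodMk_left)
          (fun a => hBf (s, a)))
    have hPg : (∫ s', polExp pol g s' ∂(P x))
        = (∫ s', polExp pol fstar s' ∂(P x)) - ∫ s', polExp pol f s' ∂(P x) := by
      rw [integral_congr_ae (Filter.Eventually.of_forall hpolg)]
      exact integral_sub
        (WSLAux.integrable_of_bdd (WSLAux.measurable_polExp pol hfstar_meas)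
          (fun s => WSLAux.abs_polExp_le pol hBs s))
        (WSLAux.integrable_of_bdd (WSLAux.measurable_polExp pol hf_meas)
          (fun s => WSLAux.abs_polExp_le pol hBf s))
    have hfx : rew x + γ * ∫ s', polExp pol fstar s' ∂(P x) = fstar x := congrFun hfix x
    have hTx : T x = rew x + γ * ∫ s', polExp pol f s' ∂(P x) := rfl
    rw [hPg]
    show (fstar x - f x) - γ * _ = -(f x - T x)
    rw [hTx]
    ring_nf
    linarith [hfx]
  -- the integral processes
  set Ih : ℕ → ℝ := fun h => ∫ x, g x ∂(stepLaw P pol s0 h) with hIh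
  set Eh : ℕ → ℝ := fun h => ∫ x, e x ∂(stepLaw P pol s0 h) with hEh
  set Ah : ℕ → ℝ := fun h => ∫ x, |e x| ∂(stepLaw P pol s0 h) with hAh
  have hrec : ∀ h, Ih h = γ * Ih (h + 1) - Eh h := by
    intro h
    haveI := WSLAux.stepLaw_prob P pol s0 h
    have h2 : ∫ x, (g x - γ * ∫ s', polExp pol g s' ∂(P x)) ∂(stepLaw P pol s0 h)
        = ∫ x, (- e x) ∂(stepLaw P pol s0 h) :=
      integral_congr_ae (Filter.Eventually.of_forall key)
    rw [integral_sub (WSLAux.integrable_of_bdd hg_meas hg_bdd)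
        ((WSLAux.integrable_of_bdd hPg_meas hPg_bdd).const_mul γ),
      integral_neg, integral_const_mul,
      ← WSLAux.integral_stepLaw_succ P pol s0 h hg_meas hg_bdd] at h2
    have : Ih h - γ * Ih (h + 1) = - Eh h := h2
    linarith
  -- telescoping
  have htel : ∀ n, Ih 0 = γ ^ n * Ih n - ∑ h ∈ Finset.range n, γ ^ h * Eh h := by
    intro n
    induction n with
    | zero => simp
    | succ n ihn => rw [Finset.sum_range_succ, ihn, hrec n]; ring
  -- bounds
  have hIb : ∀ n, |Ih n| ≤ Bs + Bf := by
    intro n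
    haveI := WSLAux.stepLaw_prob P pol s0 n
    have := norm_integral_le_of_norm_le_const (μ := stepLaw P pol s0 n) (C := Bs + Bf)
      (f := g) (Filter.Eventually.of_forall fun x => by simpa using hg_bdd x)
    simpa using this
  have hAnn : ∀ h, 0 ≤ Ah h := fun h => integral_nonneg fun x => abs_nonneg _
  have hEb : ∀ h, |Eh h| ≤ Ah h := by
    intro h
    have := norm_integral_le_integral_norm (μ := stepLaw P pol s0 h) e
    simpa [Real.norm_eq_abs] using this
  have hAb : ∀ h, Ah h ≤ Bf + (1 + γ * Bf) := by
    intro h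
    haveI := WSLAux.stepLaw_prob P pol s0 h
    have h1 := norm_integral_le_of_norm_le_const (μ := stepLaw P pol s0 h)
      (C := Bf + (1 + γ * Bf)) (f := fun x => |e x|)
      (Filter.Eventually.of_forall fun x => by simpa [abs_abs] using he_bdd x)
    calc Ah h ≤ |Ah h| := le_abs_self _
    _ ≤ _ := by simpa using h1
  -- summability
  have hsum : Summable fun h => γ ^ h * Ah h := by
    refine Summable.of_nonneg_of_le
      (fun h => mul_nonneg (pow_nonneg hγ0 _) (hAnn h))
      (fun h => ?_) (((summable_geometric_of_lt_one hγ0 hγ1)).mul_right (Bf + (1 + γ * Bf)))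
    exact mul_le_mul_of_nonneg_left (hAb h) (pow_nonneg hγ0 h)
  -- the limit
  have htend : Filter.Tendsto (fun n => γ ^ n * Ih n) Filter.atTop (nhds 0) := by
    refine squeeze_zero_norm (a := fun n => γ ^ n * (Bs + Bf)) (fun n => ?_) ?_
    · rw [norm_mul, norm_pow, Real.norm_eq_abs, Real.norm_eq_abs, abs_of_nonneg hγ0]
      exact mul_le_mul_of_nonneg_left (hIb n) (pow_nonneg hγ0 n)
    · have := (tendsto_pow_atTop_nhds_zero_of_lt_one hγ0 hγ1).mul_const (Bs + Bf)
      simpa using this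
  have h5 : Filter.Tendsto (fun n => |∑ h ∈ Finset.range n, γ ^ h * Eh h|)
      Filter.atTop (nhds |Ih 0|) := by
    have h6 := (htend.sub_const (Ih 0)).abs
    simp only [zero_sub, abs_neg] at h6
    exact h6.congr fun n => by rw [← (by linarith [htel n] :
      (∑ h ∈ Finset.range n, γ ^ h * Eh h) = γ ^ n * Ih n - Ih 0)]
  have hIle : |Ih 0| ≤ ∑' h, γ ^ h * Ah h := by
    refine le_of_tendsto h5 (Filter.Eventually.of_forall fun n => ?_)
    calc |∑ h ∈ Finset.range n, γ ^ h * Eh h|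
        ≤ ∑ h ∈ Finset.range n, |γ ^ h * Eh h| := Finset.abs_sum_le_sum_abs _ _
    _ ≤ ∑ h ∈ Finset.range n, γ ^ h * Ah h := by
        refine Finset.sum_le_sum fun h _ => ?_
        rw [abs_mul, abs_of_nonneg (pow_nonneg hγ0 h)]
        exact mul_le_mul_of_nonneg_left (hEb h) (pow_nonneg hγ0 h)
    _ ≤ ∑' h, γ ^ h * Ah h := Summable.sum_le_tsum _
        (fun h _ => mul_nonneg (pow_nonneg hγ0 _) (hAnn h)) hsum
  -- identification of the prediction error
  have hpe : predErr pol fstar f s0 = Ih 0 := by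
    show polExp pol g s0 = ∫ x, g x ∂((pol s0).map fun a => (s0, a))
    rw [integral_map (φ := fun a : A => (s0, a)) measurable_prodMk_left.aemeasurable
      hg_meas.aestronglyMeasurable]
    rfl
  -- occupancy integral identity
  have hocc : ∫ x, |e x| ∂(occMeas γ P pol s0) = (1 - γ) * ∑' h, γ ^ h * Ah h :=
    WSLAux.integral_occ P pol hγ0 hγ1 s0 he_meas.abs
      (fun z => by simpa [abs_abs] using he_bdd z)
  -- Cauchy-Schwarz on the occupancy measure
  haveI := WSLAux.occ_prob P pol hγ0 hγ1 s0
  have hcs : ∫ x, |e x| ∂(occMeas γ P pol s0) ≤ l2 (occMeas γ P pol s0) e := by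
    have hconj : Real.HolderConjugate 2 2 := Real.holderConjugate_iff.mpr ⟨by norm_num, by norm_num⟩
    have hmem1 : MemLp (fun x => |e x|) (ENNReal.ofReal 2) (occMeas γ P pol s0) :=
      MemLp.of_bound he_meas.abs.aestronglyMeasurable (Bf + (1 + γ * Bf))
        (Filter.Eventually.of_forall fun x => by simpa [abs_abs] using he_bdd x)
    have hmem2 : MemLp (fun _ : S × A => (1 : ℝ)) (ENNReal.ofReal 2) (occMeas γ P pol s0) :=
      memLp_const 1
    have h7 := integral_mul_le_Lp_mul_Lq_of_nonneg hconj
      (Filter.Eventually.of_forall fun x => abs_nonneg (e x))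
      (Filter.Eventually.of_forall fun _ => zero_le_one) hmem1 hmem2
    simp only [mul_one] at h7
    have h8 : ∫ x, |e x| ^ (2 : ℝ) ∂(occMeas γ P pol s0) = l2sq (occMeas γ P pol s0) e := by
      refine integral_congr_ae (Filter.Eventually.of_forall fun x => ?_)
      show |e x| ^ (2 : ℝ) = e x ^ 2
      rw [Real.rpow_two, sq_abs]
    have h9 : ∫ x, (1 : ℝ) ^ (2 : ℝ) ∂(occMeas γ P pol s0) = 1 := by
      simp [Real.one_rpow]
    rw [h8, h9, Real.one_rpow, mul_one] at h7
    calc ∫ x, |e x| ∂(occMeas γ P pol s0) ≤ l2sq (occMeas γ P pol s0) e ^ ((1 : ℝ) / 2) := h7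
    _ = l2 (occMeas γ P pol s0) e := (Real.sqrt_eq_rpow _).symm
  -- conclusion
  have hfinal : ∑' h, γ ^ h * Ah h = (1 / (1 - γ)) * ∫ x, |e x| ∂(occMeas γ P pol s0) := by
    rw [hocc]; field_simp
  rw [hpe]
  calc |Ih 0| ≤ ∑' h, γ ^ h * Ah h := hIle
  _ = (1 / (1 - γ)) * ∫ x, |e x| ∂(occMeas γ P pol s0) := hfinal
  _ ≤ (1 / (1 - γ)) * l2 (occMeas γ P pol s0) e :=
      mul_le_mul_of_nonneg_left hcs (by positivity)

end
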